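/- There is no 2-dimensional subspace V of the 6-dimensional space Sym²ℝ³ such that every nonzero element of V has at least two nonzero eigenvalues of the same sign; equivalently, for d = 3, m = 2 there is no linear map A : Sym²ℝ³ → ℝ² satisfying the Dodson–Rynne–Vickers eigenvalue condition. -/

import Mathlib

open Matrix

/-- The quadratic form of a matrix. -/
private def q3 (B : Matrix (Fin 3) (Fin 3) ℝ) (x : Fin 3 → ℝ) : ℝ := x ⬝ᵥ (B *ᵥ x)

/-- `B` is uniformly positive definite on a 2-plane spanned by an orthonormal pair. -/
private def PosPlane (B : Matrix (Fin 3) (Fin 3) ℝ) : Prop :=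
  ∃ u w : Fin 3 → ℝ, ∃ m : ℝ, 0 < m ∧ u ⬝ᵥ u = 1 ∧ w ⬝ᵥ w = 1 ∧ u ⬝ᵥ w = 0 ∧
    ∀ a b : ℝ, m * (a ^ 2 + b ^ 2) ≤ q3 B (a • u + b • w)

private lemma q3_add (B E : Matrix (Fin 3) (Fin 3) ℝ) (x : Fin 3 → ℝ) :
    q3 (B + E) x = q3 B x + q3 E x := by
  simp [q3, add_mulVec, dotProduct_add]

private lemma q3_neg (B : Matrix (Fin 3) (Fin 3) ℝ) (x : Fin 3 → ℝ) :
    q3 (-B) x = - q3 B x := by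
  simp [q3, neg_mulVec, dotProduct_neg]

private lemma sq_le_dot (v : Fin 3 → ℝ) (k : Fin 3) : v k ^ 2 ≤ v ⬝ᵥ v := by
  have : v ⬝ᵥ v = ∑ i, v i ^ 2 := by simp [dotProduct, sq]
  rw [this]
  exact Finset.single_le_sum (f := fun i => v i ^ 2) (fun i _ => sq_nonneg _)
    (Finset.mem_univ k)

/-- Crude bound for the quadratic form in terms of entries. -/
private lemma q3_bound (E : Matrix (Fin 3) (Fin 3) ℝ) (v : Fin 3 → ℝ) :
    |q3 E v| ≤ (∑ i, ∑ j, |E i j|) * (v ⬝ᵥ v) := by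
  have habs : ∀ i j : Fin 3, |v i * (E i j * v j)| ≤ |E i j| * (v ⬝ᵥ v) := by
    intro i j
    have h1 := sq_le_dot v i
    have h2 := sq_le_dot v j
    have h3 : |v i * v j| ≤ v ⬝ᵥ v := by
      rw [abs_le]
      constructor <;> nlinarith [sq_nonneg (v i - v j), sq_nonneg (v i + v j)]
    calc |v i * (E i j * v j)| = |E i j| * |v i * v j| := by
          rw [abs_mul, abs_mul, abs_mul]; ring
      _ ≤ |E i j| * (v ⬝ᵥ v) := by
          exact mul_le_mul_of_nonneg_left h3 (abs_nonneg _)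
  have hq : q3 E v = ∑ i, ∑ j, v i * (E i j * v j) := by
    simp [q3, dotProduct, mulVec, Finset.mul_sum]
  rw [hq]
  calc |∑ i, ∑ j, v i * (E i j * v j)| ≤ ∑ i, |∑ j, v i * (E i j * v j)| :=
        Finset.abs_sum_le_sum_abs _ _
    _ ≤ ∑ i, ∑ j, |v i * (E i j * v j)| :=
        Finset.sum_le_sum fun i _ => Finset.abs_sum_le_sum_abs _ _
    _ ≤ ∑ i, ∑ j, |E i j| * (v ⬝ᵥ v) :=
        Finset.sum_le_sum fun i _ => Finset.sum_le_sum fun j _ => habs i j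
    _ = (∑ i, ∑ j, |E i j|) * (v ⬝ᵥ v) := by rw [Finset.sum_mul]; simp [Finset.sum_mul]

private lemma q3_eigen (B : Matrix (Fin 3) (Fin 3) ℝ) (u w : Fin 3 → ℝ) (lam mu : ℝ)
    (hu : B *ᵥ u = lam • u) (hw : B *ᵥ w = mu • w)
    (huu : u ⬝ᵥ u = 1) (hww : w ⬝ᵥ w = 1) (huw : u ⬝ᵥ w = 0) (a b : ℝ) :
    q3 B (a • u + b • w) = lam * a ^ 2 + mu * b ^ 2 := by
  have hwu : w ⬝ᵥ u = 0 := by rw [dotProduct_comm]; exact huw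
  simp only [q3, mulVec_add, mulVec_smul, hu, hw, smul_smul, add_dotProduct,
    dotProduct_add, smul_dotProduct, dotProduct_smul, smul_eq_mul, huu, hww, huw, hwu]
  ring

private lemma dot_self_pair (u w : Fin 3 → ℝ)
    (huu : u ⬝ᵥ u = 1) (hww : w ⬝ᵥ w = 1) (huw : u ⬝ᵥ w = 0) (a b : ℝ) :
    (a • u + b • w) ⬝ᵥ (a • u + b • w) = a ^ 2 + b ^ 2 := by
  have hwu : w ⬝ᵥ u = 0 := by rw [dotProduct_comm]; exact huw
  simp only [add_dotProduct, dotProduct_add, smul_dotProduct, dotProduct_smul,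
    smul_eq_mul, huu, hww, huw, hwu]
  ring

/-- If `B` has two orthonormal eigenvectors with positive eigenvalues, then `PosPlane B`. -/
private lemma posPlane_of_eigen (B : Matrix (Fin 3) (Fin 3) ℝ) (u w : Fin 3 → ℝ)
    (lam mu : ℝ) (hu : B *ᵥ u = lam • u) (hw : B *ᵥ w = mu • w)
    (huu : u ⬝ᵥ u = 1) (hww : w ⬝ᵥ w = 1) (huw : u ⬝ᵥ w = 0)
    (hlam : 0 < lam) (hmu : 0 < mu) : PosPlane B := by
  refine ⟨u, w, min lam mu, lt_min hlam hmu, huu, hww, huw, fun a b => ?_⟩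
  rw [q3_eigen B u w lam mu hu hw huu hww huw a b]
  have h1 : min lam mu ≤ lam := min_le_left _ _
  have h2 : min lam mu ≤ mu := min_le_right _ _
  nlinarith [sq_nonneg a, sq_nonneg b]

/-- Two 2-planes in `ℝ³` meet: `PosPlane B` and `PosPlane (-B)` are incompatible. -/
private lemma posPlane_exclusive (B : Matrix (Fin 3) (Fin 3) ℝ)
    (h1 : PosPlane B) (h2 : PosPlane (-B)) : False := by
  obtain ⟨u, w, m, hm, huu, hww, huw, hq⟩ := h1
  obtain ⟨u', w', m', hm', huu', hww', huw', hq'⟩ := h2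
  -- the spans
  have li : ∀ (u w : Fin 3 → ℝ), u ⬝ᵥ u = 1 → w ⬝ᵥ w = 1 → u ⬝ᵥ w = 0 →
      LinearIndependent ℝ ![u, w] := by
    intro u w huu hww huw
    rw [LinearIndependent.pair_iff]
    intro s t hst
    have hwu : w ⬝ᵥ u = 0 := by rw [dotProduct_comm]; exact huw
    have h1 : (s • u + t • w) ⬝ᵥ u = 0 := by rw [hst]; simp
    have h2 : (s • u + t • w) ⬝ᵥ w = 0 := by rw [hst]; simp
    simp only [add_dotProduct, smul_dotProduct, smul_eq_mul, huu, hww, huw, hwu,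
      mul_one, mul_zero, add_zero, zero_add] at h1 h2
    exact ⟨h1, h2⟩
  have fr : ∀ (u w : Fin 3 → ℝ), u ⬝ᵥ u = 1 → w ⬝ᵥ w = 1 → u ⬝ᵥ w = 0 →
      Module.finrank ℝ (Submodule.span ℝ ({u, w} : Set (Fin 3 → ℝ))) = 2 := by
    intro u w huu hww huw
    have := finrank_span_eq_card (li u w huu hww huw)
    rwa [Matrix.range_cons_cons_empty, Fintype.card_fin] at this
  set W1 : Submodule ℝ (Fin 3 → ℝ) := Submodule.span ℝ ({u, w} : Set (Fin 3 → ℝ))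
  set W2 : Submodule ℝ (Fin 3 → ℝ) := Submodule.span ℝ ({u', w'} : Set (Fin 3 → ℝ))
  have hsum := Submodule.finrank_sup_add_finrank_inf_eq W1 W2
  rw [fr u w huu hww huw, fr u' w' huu' hww' huw'] at hsum
  have hle : Module.finrank ℝ (W1 ⊔ W2 : Submodule ℝ (Fin 3 → ℝ)) ≤ 3 := by
    have := Submodule.finrank_le (W1 ⊔ W2)
    simpa using this
  have hpos : W1 ⊓ W2 ≠ ⊥ := by
    intro hbot
    rw [hbot, finrank_bot] at hsum
    omega
  obtain ⟨x, hx, hx0⟩ := Submodule.exists_mem_ne_zero_of_ne_bot hpos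
  obtain ⟨a, b, hab⟩ := Submodule.mem_span_pair.1 hx.1
  obtain ⟨c, d, hcd⟩ := Submodule.mem_span_pair.1 hx.2
  have hab0 : 0 < a ^ 2 + b ^ 2 := by
    rcases eq_or_ne a 0 with ha | ha
    · rcases eq_or_ne b 0 with hb | hb
      · exfalso; apply hx0; rw [← hab, ha, hb]; simp
      · nlinarith [sq_nonneg a, sq_nonneg b, sq_abs b, abs_pos.2 hb]
    · nlinarith [sq_nonneg a, sq_nonneg b, sq_abs a, abs_pos.2 ha]
  have hcd0 : 0 < c ^ 2 + d ^ 2 := by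
    rcases eq_or_ne c 0 with hc | hc
    · rcases eq_or_ne d 0 with hd | hd
      · exfalso; apply hx0; rw [← hcd, hc, hd]; simp
      · nlinarith [sq_abs d, abs_pos.2 hd]
    · nlinarith [sq_abs c, abs_pos.2 hc]
  have hq1 : 0 < q3 B x := by
    have := hq a b
    rw [hab] at this
    nlinarith
  have hq2 : 0 < q3 (-B) x := by
    have := hq' c d
    rw [hcd] at this
    nlinarith
  rw [q3_neg] at hq2
  linarith

/-- Openness of the `PosPlane` condition along a 2-parameter family. -/
private lemma posPlane_isOpen (P Q : Matrix (Fin 3) (Fin 3) ℝ) :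
    IsOpen {p : ℝ × ℝ | PosPlane (p.1 • P + p.2 • Q)} := by
  rw [Metric.isOpen_iff]
  rintro ⟨s, t⟩ hp
  obtain ⟨u, w, m, hm, huu, hww, huw, hq⟩ := hp
  set CP : ℝ := ∑ i, ∑ j, |P i j| with hCP
  set CQ : ℝ := ∑ i, ∑ j, |Q i j| with hCQ
  have hCPnn : 0 ≤ CP := Finset.sum_nonneg fun i _ => Finset.sum_nonneg fun j _ => abs_nonneg _
  have hCQnn : 0 ≤ CQ := Finset.sum_nonneg fun i _ => Finset.sum_nonneg fun j _ => abs_nonneg _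
  set C : ℝ := CP + CQ + 1 with hC
  have hCpos : 0 < C := by positivity
  refine ⟨m / (2 * C), by positivity, ?_⟩
  rintro ⟨s', t'⟩ hdist
  have hds : |s' - s| ≤ m / (2 * C) := by
    have : dist s' s ≤ dist (s', t') (s, t) := le_max_left _ _
    rw [Real.dist_eq] at this
    linarith [le_of_lt (lt_of_le_of_lt this hdist)]
  have hdt : |t' - t| ≤ m / (2 * C) := by
    have : dist t' t ≤ dist (s', t') (s, t) := le_max_right _ _
    rw [Real.dist_eq] at this
    linarith [le_of_lt (lt_of_le_of_lt this hdist)]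
  -- the perturbation matrix
  set E : Matrix (Fin 3) (Fin 3) ℝ := (s' - s) • P + (t' - t) • Q with hE
  have hdecomp : s' • P + t' • Q = (s • P + t • Q) + E := by
    rw [hE]; ext i j; simp [Matrix.add_apply]; ring
  have hEbound : (∑ i, ∑ j, |E i j|) ≤ m / 2 := by
    have step : (∑ i, ∑ j, |E i j|) ≤ |s' - s| * CP + |t' - t| * CQ := by
      rw [hCP, hCQ, Finset.mul_sum, Finset.mul_sum, ← Finset.sum_add_distrib]
      refine Finset.sum_le_sum fun i _ => ?_
      rw [Finset.mul_sum, Finset.mul_sum, ← Finset.sum_add_distrib]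
      refine Finset.sum_le_sum fun j _ => ?_
      calc |E i j| = |(s' - s) * P i j + (t' - t) * Q i j| := by simp [hE, Matrix.add_apply]
        _ ≤ |(s' - s) * P i j| + |(t' - t) * Q i j| := abs_add_le _ _
        _ = |s' - s| * |P i j| + |t' - t| * |Q i j| := by rw [abs_mul, abs_mul]
    have h2 : |s' - s| * CP + |t' - t| * CQ ≤ m / (2 * C) * CP + m / (2 * C) * CQ := by
      gcongr
    have h3 : m / (2 * C) * CP + m / (2 * C) * CQ ≤ m / (2 * C) * C := by
      rw [← mul_add]
      have : CP + CQ ≤ C := by rw [hC]; linarith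
      have hpos : (0 : ℝ) ≤ m / (2 * C) := by positivity
      nlinarith
    have h4 : m / (2 * C) * C = m / 2 := by field_simp
    linarith
  refine ⟨u, w, m / 2, by positivity, huu, hww, huw, fun a b => ?_⟩
  set v : Fin 3 → ℝ := a • u + b • w with hv
  have hvv : v ⬝ᵥ v = a ^ 2 + b ^ 2 := dot_self_pair u w huu hww huw a b
  have hvvnn : 0 ≤ a ^ 2 + b ^ 2 := by positivity
  have hEq : |q3 E v| ≤ (m / 2) * (a ^ 2 + b ^ 2) := by
    calc |q3 E v| ≤ (∑ i, ∑ j, |E i j|) * (v ⬝ᵥ v) := q3_bound E v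
      _ = (∑ i, ∑ j, |E i j|) * (a ^ 2 + b ^ 2) := by rw [hvv]
      _ ≤ (m / 2) * (a ^ 2 + b ^ 2) := by
          exact mul_le_mul_of_nonneg_right hEbound hvvnn
  have habs := abs_le.1 hEq
  have hbase := hq a b
  rw [show (s', t').1 • P + (s', t').2 • Q = (s • P + t • Q) + E from hdecomp, q3_add]
  have : m / 2 * (a ^ 2 + b ^ 2) = m * (a ^ 2 + b ^ 2) - m / 2 * (a ^ 2 + b ^ 2) := by ring
  rw [this]
  have := habs.1
  simp only [hv] at *
  linarith

/-- Orthonormality facts for the eigenvector basis, in dot-product form. -/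
private lemma eigen_dot (B : Matrix (Fin 3) (Fin 3) ℝ) (hB : B.IsHermitian) (i j : Fin 3)
    (hij : i ≠ j) :
    (⇑(hB.eigenvectorBasis i) : Fin 3 → ℝ) ⬝ᵥ ⇑(hB.eigenvectorBasis i) = 1 ∧
    (⇑(hB.eigenvectorBasis j) : Fin 3 → ℝ) ⬝ᵥ ⇑(hB.eigenvectorBasis j) = 1 ∧
    (⇑(hB.eigenvectorBasis i) : Fin 3 → ℝ) ⬝ᵥ ⇑(hB.eigenvectorBasis j) = 0 := by
  have horth := hB.eigenvectorBasis.orthonormal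
  rw [orthonormal_iff_ite] at horth
  have key : ∀ k l : Fin 3,
      (⇑(hB.eigenvectorBasis k) : Fin 3 → ℝ) ⬝ᵥ ⇑(hB.eigenvectorBasis l)
        = if k = l then 1 else 0 := by
    intro k l
    have := horth k l
    rw [PiLp.inner_apply] at this
    simpa [dotProduct, mul_comm] using this
  refine ⟨?_, ?_, ?_⟩
  · rw [key i i]; simp
  · rw [key j j]; simp
  · rw [key i j]; simp [hij]

/-- There is no 2-dimensional subspace V of the symmetric 3×3 real matrices
such that every nonzero element of V has at least two nonzero eigenvalues of
the same sign. -/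
theorem no_two_dim_subspace_two_same_sign :
    ¬ ∃ V : Submodule ℝ (Matrix (Fin 3) (Fin 3) ℝ),
        (∀ B ∈ V, B.transpose = B) ∧ Module.finrank ℝ V = 2 ∧
        ∀ B ∈ V, B ≠ 0 → ∀ (hB : B.IsHermitian),
          ∃ i j : Fin 3, i ≠ j ∧
            ((0 < hB.eigenvalues i ∧ 0 < hB.eigenvalues j) ∨
             (hB.eigenvalues i < 0 ∧ hB.eigenvalues j < 0)) := by
  rintro ⟨V, hsymm, hrank, H⟩
  have : FiniteDimensional ℝ V := FiniteDimensional.finiteDimensional_submodule V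
  obtain ⟨P, Q, hPmem, hQmem, hPQ⟩ : ∃ P Q : Matrix (Fin 3) (Fin 3) ℝ,
      P ∈ V ∧ Q ∈ V ∧ ∀ s t : ℝ, s • P + t • Q = 0 → s = 0 ∧ t = 0 := by
    let bV : Module.Basis (Fin 2) ℝ V := Module.finBasisOfFinrankEq ℝ V hrank
    refine ⟨(bV 0).1, (bV 1).1, (bV 0).2, (bV 1).2, ?_⟩
    intro s t h0
    have hzero : s • bV 0 + t • bV 1 = (0 : V) := Subtype.ext (by simpa using h0)
    have hli := bV.linearIndependent
    rw [Fintype.linearIndependent_iff] at hli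
    have := hli ![s, t] (by rw [Fin.sum_univ_two]; simpa using hzero)
    exact ⟨by simpa using this 0, by simpa using this 1⟩
  -- membership and nonvanishing of the family
  have hmem : ∀ p : ℝ × ℝ, p.1 • P + p.2 • Q ∈ V := by
    intro p
    exact V.add_mem (V.smul_mem _ hPmem) (V.smul_mem _ hQmem)
  have hne : ∀ p : ℝ × ℝ, p ≠ 0 → p.1 • P + p.2 • Q ≠ 0 := by
    intro p hp h0
    obtain ⟨h1, h2⟩ := hPQ p.1 p.2 h0
    exact hp (Prod.ext h1 h2)
  -- positive/negative plane conditions on parameter space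
  set U : Set (ℝ × ℝ) := {p | PosPlane (p.1 • P + p.2 • Q)} with hU
  set Wn : Set (ℝ × ℝ) := {p | PosPlane (p.1 • (-P) + p.2 • (-Q))} with hWn
  have hUopen : IsOpen U := posPlane_isOpen P Q
  have hWopen : IsOpen Wn := posPlane_isOpen (-P) (-Q)
  have hnegform : ∀ p : ℝ × ℝ, p.1 • (-P) + p.2 • (-Q) = -(p.1 • P + p.2 • Q) := by
    intro p; ext i j; simp [Matrix.add_apply]; ring
  have hdisj : Disjoint U Wn := by
    rw [Set.disjoint_left]
    intro p hpU hpW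
    rw [hWn, Set.mem_setOf_eq, hnegform p] at hpW
    exact posPlane_exclusive _ hpU hpW
  -- every nonzero parameter is in U or Wn
  have hcover : ({(0 : ℝ × ℝ)}ᶜ : Set (ℝ × ℝ)) ⊆ U ∪ Wn := by
    intro p hp
    have hp0 : p ≠ 0 := hp
    set B : Matrix (Fin 3) (Fin 3) ℝ := p.1 • P + p.2 • Q with hBdef
    have hBV : B ∈ V := hmem p
    have hB0 : B ≠ 0 := hne p hp0
    have hBsymm : B.transpose = B := hsymm B hBV
    have hB : B.IsHermitian := by
      unfold Matrix.IsHermitian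
      ext i j
      rw [Matrix.conjTranspose_apply, star_trivial]
      exact congrFun (congrFun hBsymm i) j
    obtain ⟨i, j, hij, hcase⟩ := H B hBV hB0 hB
    obtain ⟨huu, hww, huw⟩ := eigen_dot B hB i j hij
    have hui := hB.mulVec_eigenvectorBasis i
    have huj := hB.mulVec_eigenvectorBasis j
    rcases hcase with ⟨hi, hj⟩ | ⟨hi, hj⟩
    · left
      exact posPlane_of_eigen B _ _ _ _ hui huj huu hww huw hi hj
    · right
      rw [hWn, Set.mem_setOf_eq, hnegform p]
      refine posPlane_of_eigen (-B) _ _ (-(hB.eigenvalues i)) (-(hB.eigenvalues j))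
        ?_ ?_ huu hww huw (by linarith) (by linarith)
      · rw [neg_mulVec, hui, neg_smul]
      · rw [neg_mulVec, huj, neg_smul]
  -- connectivity of the punctured plane
  have hconn : IsPreconnected ({(0 : ℝ × ℝ)}ᶜ : Set (ℝ × ℝ)) := by
    refine (isConnected_compl_singleton_of_one_lt_rank ?_ 0).isPreconnected
    rw [rank_prod', Module.rank_self]
    exact_mod_cast one_lt_two
  have hone : ((1 : ℝ), (0 : ℝ)) ∈ ({(0 : ℝ × ℝ)}ᶜ : Set (ℝ × ℝ)) := by
    simp [Prod.ext_iff]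
  have hmone : ((-1 : ℝ), (0 : ℝ)) ∈ ({(0 : ℝ × ℝ)}ᶜ : Set (ℝ × ℝ)) := by
    simp [Prod.ext_iff]
  rcases IsPreconnected.subset_or_subset hUopen hWopen hdisj hcover hconn with hsub | hsub
  · have h1 := hsub hone
    have h2 := hsub hmone
    rw [hU, Set.mem_setOf_eq] at h1 h2
    simp only [neg_smul, one_smul, zero_smul, add_zero, neg_neg] at h1 h2
    exact posPlane_exclusive P h1 h2
  · have h1 := hsub hone
    have h2 := hsub hmone
    rw [hWn, Set.mem_setOf_eq] at h1 h2
    simp only [neg_smul, one_smul, zero_smul, add_zero, neg_neg] at h1 h2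
    exact posPlane_exclusive P h2 h1
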